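/- arXiv:2412.10658 — 3 statements merged into one kernel-verified Lean document; each statement's English description precedes it below -/
import Mathlib

section
/- Let s₁, s₂, s₃ ∈ (0,1) be pairwise distinct and let (α, β, c), (α', β', c') ∈ ℝ³. If g(sᵢ; α, β, c) = g(sᵢ; α', β', c') for i = 1, 2, 3, then α = α', β = β', and c = c'. In other words, a function in the family g is uniquely determined by its values at any three distinct points of (0,1). -/
/-- The calibration-curve family `g(s; α, β, c) = 1/(1 + s^{−α}·(1−s)^{β}·e^{c})`. -/
noncomputable def calCurve (α β c s : ℝ) : ℝ :=
  1 / (1 + s ^ (-α) * (1 - s) ^ β * Real.exp c)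

private lemma hasDerivAt_f (a b d : ℝ) {t : ℝ} (h0 : 0 < t) (h1 : t < 1) :
    HasDerivAt (fun s => a * Real.log s + b * Real.log (1 - s) + d)
      (a * t⁻¹ - b * (1 - t)⁻¹) t := by
  have h₁ : HasDerivAt Real.log t⁻¹ t := Real.hasDerivAt_log h0.ne'
  have h₂ : HasDerivAt (fun s : ℝ => 1 - s) (-1) t := by
    exact (hasDerivAt_id t).const_sub (1:ℝ)
  have h₃ : HasDerivAt (fun s => Real.log (1 - s)) ((1 - t)⁻¹ * (-1)) t :=
    (Real.hasDerivAt_log (by linarith : (1:ℝ) - t ≠ 0)).comp t h₂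
  have := ((h₁.const_mul a).add (h₃.const_mul b)).add_const d
  exact this.congr_deriv (by ring)

/-- Rolle-type step: equal values at two points force a zero of the derivative. -/
private lemma rolle_step (a b d : ℝ) {u v : ℝ} (hu : 0 < u) (huv : u < v) (hv : v < 1)
    (he : a * Real.log u + b * Real.log (1 - u) + d
        = a * Real.log v + b * Real.log (1 - v) + d) :
    ∃ t, u < t ∧ t < v ∧ a * (1 - t) = b * t := by
  set f : ℝ → ℝ := fun s => a * Real.log s + b * Real.log (1 - s) + d with hf
  have hderiv : ∀ x ∈ Set.Ioo u v,
      HasDerivAt f (a * x⁻¹ - b * (1 - x)⁻¹) x := fun x hx =>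
    hasDerivAt_f a b d (lt_trans hu hx.1) (lt_trans hx.2 hv)
  have hcont : ContinuousOn f (Set.Icc u v) := fun x hx =>
    (hasDerivAt_f a b d (lt_of_lt_of_le hu hx.1) (lt_of_le_of_lt hx.2 hv)).continuousAt.continuousWithinAt
  obtain ⟨t, ht, hz⟩ := exists_hasDerivAt_eq_slope f _ huv hcont hderiv
  refine ⟨t, ht.1, ht.2, ?_⟩
  have ht0 : 0 < t := lt_trans hu ht.1
  have ht1 : t < 1 := lt_trans ht.2 hv
  rw [hf] at hz
  simp only at hz
  rw [← he] at hz
  have hz' : a * t⁻¹ - b * (1 - t)⁻¹ = 0 := by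
    rw [hz]; simp
  have ht0' : t ≠ 0 := ht0.ne'
  have h1t : (1:ℝ) - t ≠ 0 := by linarith
  field_simp at hz'
  linarith

private lemma key (a b d : ℝ) {u v w : ℝ} (hu : 0 < u) (huv : u < v) (hvw : v < w)
    (hw : w < 1)
    (e1 : a * Real.log u + b * Real.log (1 - u) + d = 0)
    (e2 : a * Real.log v + b * Real.log (1 - v) + d = 0)
    (e3 : a * Real.log w + b * Real.log (1 - w) + d = 0) :
    a = 0 ∧ b = 0 ∧ d = 0 := by
  obtain ⟨t₁, ht₁u, ht₁v, hz₁⟩ := rolle_step a b d hu huv (lt_trans hvw hw) (by rw [e1, e2])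
  obtain ⟨t₂, ht₂v, ht₂w, hz₂⟩ := rolle_step a b d (lt_trans hu huv) hvw hw (by rw [e2, e3])
  have ht : t₁ < t₂ := lt_trans ht₁v ht₂v
  have hab : a + b = 0 := by
    by_contra hab
    have : t₁ = t₂ := by
      have h1 : a = (a + b) * t₁ := by linarith [hz₁]
      have h2 : a = (a + b) * t₂ := by linarith [hz₂]
      have := h1.symm.trans h2
      exact mul_left_cancel₀ hab this
    linarith
  have ha : a = 0 := by nlinarith [hz₁]
  have hb : b = 0 := by linarith
  refine ⟨ha, hb, ?_⟩
  rw [ha, hb] at e1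
  linarith [e1]

private lemma key3 (a b d : ℝ) {s₁ s₂ s₃ : ℝ}
    (hs₁ : s₁ ∈ Set.Ioo (0:ℝ) 1) (hs₂ : s₂ ∈ Set.Ioo (0:ℝ) 1) (hs₃ : s₃ ∈ Set.Ioo (0:ℝ) 1)
    (h₁₂ : s₁ ≠ s₂) (h₁₃ : s₁ ≠ s₃) (h₂₃ : s₂ ≠ s₃)
    (e1 : a * Real.log s₁ + b * Real.log (1 - s₁) + d = 0)
    (e2 : a * Real.log s₂ + b * Real.log (1 - s₂) + d = 0)
    (e3 : a * Real.log s₃ + b * Real.log (1 - s₃) + d = 0) :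
    a = 0 ∧ b = 0 ∧ d = 0 := by
  obtain ⟨p1, q1⟩ := hs₁; obtain ⟨p2, q2⟩ := hs₂; obtain ⟨p3, q3⟩ := hs₃
  rcases h₁₂.lt_or_gt with h12 | h12 <;>
    rcases h₁₃.lt_or_gt with h13 | h13 <;>
      rcases h₂₃.lt_or_gt with h23 | h23
  · exact key a b d p1 h12 h23 q3 e1 e2 e3
  · exact key a b d p1 h13 h23 q2 e1 e3 e2
  · linarith
  · exact key a b d p3 h13 h12 q2 e3 e1 e2
  · exact key a b d p2 h12 h13 q3 e2 e1 e3
  · linarith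
  · exact key a b d p2 h23 h13 q1 e2 e3 e1
  · exact key a b d p3 h23 h12 q1 e3 e2 e1

private lemma eqn_of_eq {α β c α' β' c' s : ℝ} (h0 : 0 < s) (h1 : s < 1)
    (h : calCurve α β c s = calCurve α' β' c' s) :
    (α' - α) * Real.log s + (β - β') * Real.log (1 - s) + (c - c') = 0 := by
  have hs1 : (0:ℝ) < 1 - s := by linarith
  have hp : ∀ x y z : ℝ, 0 < s ^ (-x) * (1 - s) ^ y * Real.exp z := fun x y z =>
    mul_pos (mul_pos (Real.rpow_pos_of_pos h0 _) (Real.rpow_pos_of_pos hs1 _))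
      (Real.exp_pos _)
  have hd : 1 + s ^ (-α) * (1 - s) ^ β * Real.exp c
      = 1 + s ^ (-α') * (1 - s) ^ β' * Real.exp c' := by
    have d1 : (0:ℝ) < 1 + s ^ (-α) * (1 - s) ^ β * Real.exp c := by linarith [hp α β c]
    have d2 : (0:ℝ) < 1 + s ^ (-α') * (1 - s) ^ β' * Real.exp c' := by linarith [hp α' β' c']
    unfold calCurve at h
    field_simp at h
    linarith
  have hprod : s ^ (-α) * (1 - s) ^ β * Real.exp c
      = s ^ (-α') * (1 - s) ^ β' * Real.exp c' := by linarith
  have hlog := congrArg Real.log hprod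
  rw [Real.log_mul (by positivity) (Real.exp_ne_zero _),
      Real.log_mul (by positivity) (Real.exp_ne_zero _),
      Real.log_mul (by positivity) (by positivity),
      Real.log_mul (by positivity) (by positivity),
      Real.log_rpow h0, Real.log_rpow h0, Real.log_rpow hs1, Real.log_rpow hs1,
      Real.log_exp, Real.log_exp] at hlog
  linarith

/-- A function in the family `g(s; α, β, c)` is uniquely determined by its values at any three
pairwise distinct points of `(0,1)`: if two members of the family agree at three such points,
their parameters coincide. -/
theorem calCurve_identifiable (s₁ s₂ s₃ : ℝ)
    (hs₁ : s₁ ∈ Set.Ioo (0:ℝ) 1) (hs₂ : s₂ ∈ Set.Ioo (0:ℝ) 1) (hs₃ : s₃ ∈ Set.Ioo (0:ℝ) 1)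
    (h₁₂ : s₁ ≠ s₂) (h₁₃ : s₁ ≠ s₃) (h₂₃ : s₂ ≠ s₃)
    (α β c α' β' c' : ℝ)
    (h1 : calCurve α β c s₁ = calCurve α' β' c' s₁)
    (h2 : calCurve α β c s₂ = calCurve α' β' c' s₂)
    (h3 : calCurve α β c s₃ = calCurve α' β' c' s₃) :
    α = α' ∧ β = β' ∧ c = c' := by
  have e1 := eqn_of_eq hs₁.1 hs₁.2 h1
  have e2 := eqn_of_eq hs₂.1 hs₂.2 h2
  have e3 := eqn_of_eq hs₃.1 hs₃.2 h3
  obtain ⟨ha, hb, hd⟩ := key3 (α' - α) (β - β') (c - c') hs₁ hs₂ hs₃ h₁₂ h₁₃ h₂₃ e1 e2 e3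
  exact ⟨by linarith, by linarith, by linarith⟩
end

section
/- Let s₁, s₂, s₃ ∈ (0,1) be pairwise distinct and let y₁, y₂, y₃ ∈ (0,1) be arbitrary. Then there exists a unique triple (α, β, c) ∈ ℝ³ such that g(sᵢ; α, β, c) = yᵢ for i = 1, 2, 3; equivalently, the linear system −α·ln(sᵢ) + β·ln(1−sᵢ) + c = ln(1/yᵢ − 1), i = 1, 2, 3, has a unique solution (α, β, c). -/
open Real Set

private lemma f_image : (fun u : ℝ => 1 - Real.exp u) '' Set.Iio 0 = Set.Ioo (0:ℝ) 1 := by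
  ext x
  constructor
  · rintro ⟨u, hu, rfl⟩
    have h1 : Real.exp u < 1 := Real.exp_lt_one_iff.2 hu
    have h2 : 0 < Real.exp u := Real.exp_pos u
    simp only [Set.mem_Ioo]
    constructor <;> linarith
  · rintro ⟨hx0, hx1⟩
    refine ⟨Real.log (1 - x), ?_, ?_⟩
    · exact Real.log_neg (by linarith) (by linarith)
    · simp only
      rw [Real.exp_log (by linarith)]; ring

private lemma strictConcave_f :
    StrictConcaveOn ℝ (Set.Iio (0:ℝ)) (fun u => Real.log (1 - Real.exp u)) := by
  have hf : StrictConcaveOn ℝ (Set.Iio (0:ℝ)) (fun u => 1 - Real.exp u) := by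
    have h1 := ((strictConvexOn_exp.subset (Set.subset_univ _) (convex_Iio 0)).neg).add_const 1
    have he : (fun u : ℝ => 1 - Real.exp u) = (-Real.exp + fun _ => 1) := by
      ext u; simp [sub_eq_neg_add]
    rw [he]; exact h1
  have hsub : (fun u : ℝ => 1 - Real.exp u) '' Set.Iio 0 ⊆ Set.Ioi (0:ℝ) := by
    rw [f_image]; exact Set.Ioo_subset_Ioi_self
  have hlog : StrictConcaveOn ℝ ((fun u : ℝ => 1 - Real.exp u) '' Set.Iio 0) Real.log :=
    strictConcaveOn_log_Ioi.subset hsub (by rw [f_image]; exact convex_Ioo 0 1)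
  have hmono : StrictMonoOn Real.log ((fun u : ℝ => 1 - Real.exp u) '' Set.Iio 0) :=
    Real.strictMonoOn_log.mono hsub
  have hinj : Set.InjOn (fun u : ℝ => 1 - Real.exp u) (Set.Iio 0) := by
    intro a _ b _ h
    have : Real.exp a = Real.exp b := by dsimp at h; linarith
    exact Real.exp_injective this
  exact hlog.comp hf hmono hinj

/-- the three-point determinant is nonzero for distinct points in `(0,1)`. -/
private lemma det_ne_zero {a b c : ℝ} (ha : a ∈ Set.Ioo (0:ℝ) 1) (hb : b ∈ Set.Ioo (0:ℝ) 1)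
    (hc : c ∈ Set.Ioo (0:ℝ) 1) (hab : a ≠ b) (hac : a ≠ c) (hbc : b ≠ c) :
    (Real.log a - Real.log b) * (Real.log (1 - a) - Real.log (1 - c)) -
      (Real.log a - Real.log c) * (Real.log (1 - a) - Real.log (1 - b)) ≠ 0 := by
  set f : ℝ → ℝ := fun u => Real.log (1 - Real.exp u) with hfdef
  have key : ∀ x y z : ℝ, x ∈ Set.Iio (0:ℝ) → z ∈ Set.Iio (0:ℝ) → x < y → y < z →
      (f z - f y) * (y - x) ≠ (f y - f x) * (z - y) := by
    intro x y z hx hz hxy hyz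
    have h := strictConcave_f.slope_anti_adjacent hx hz hxy hyz
    have h1 : (0:ℝ) < y - x := by linarith
    have h2 : (0:ℝ) < z - y := by linarith
    intro heq
    rw [div_lt_div_iff₀ h2 h1] at h
    nlinarith [heq]
  -- translate to logs
  have mem : ∀ x : ℝ, x ∈ Set.Ioo (0:ℝ) 1 → Real.log x ∈ Set.Iio (0:ℝ) :=
    fun x hx => Real.log_neg hx.1 hx.2
  have feq : ∀ x : ℝ, x ∈ Set.Ioo (0:ℝ) 1 → f (Real.log x) = Real.log (1 - x) := by
    intro x hx; simp [hfdef, Real.exp_log hx.1]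
  have hla := mem a ha; have hlb := mem b hb; have hlc := mem c hc
  have hiab : Real.log a ≠ Real.log b := fun h => hab (Real.log_injOn_pos (Set.mem_Ioi.mpr ha.1) (Set.mem_Ioi.mpr hb.1) h)
  have hiac : Real.log a ≠ Real.log c := fun h => hac (Real.log_injOn_pos (Set.mem_Ioi.mpr ha.1) (Set.mem_Ioi.mpr hc.1) h)
  have hibc : Real.log b ≠ Real.log c := fun h => hbc (Real.log_injOn_pos (Set.mem_Ioi.mpr hb.1) (Set.mem_Ioi.mpr hc.1) h)
  rw [← feq a ha, ← feq b hb, ← feq c hc]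
  set u := Real.log a; set v := Real.log b; set w := Real.log c
  intro H
  -- case on ordering of u v w
  rcases lt_trichotomy u v with huv | huv | huv
  · rcases lt_trichotomy v w with hvw | hvw | hvw
    · exact key u v w hla hlc huv hvw (by linear_combination H) |>.elim
    · exact hibc (by rw [hvw]) |>.elim
    · rcases lt_trichotomy u w with huw | huw | huw
      · exact key u w v hla hlb huw hvw (by linear_combination -H) |>.elim
      · exact hiac huw |>.elim
      · exact key w u v hlc hlb huw huv (by linear_combination H) |>.elim
  · exact hiab huv |>.elim
  · rcases lt_trichotomy u w with huw | huw | huw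
    · exact key v u w hlb hlc huv huw (by linear_combination -H) |>.elim
    · exact hiac huw |>.elim
    · rcases lt_trichotomy v w with hvw | hvw | hvw
      · exact key v w u hlb hla hvw huw (by linear_combination H) |>.elim
      · exact hibc hvw |>.elim
      · exact key w v u hlc hla hvw huv (by linear_combination -H) |>.elim

private lemma calCurve_eq_iff {α β c s y : ℝ} (hs : s ∈ Set.Ioo (0:ℝ) 1)
    (hy : y ∈ Set.Ioo (0:ℝ) 1) :
    calCurve α β c s = y ↔
      -α * Real.log s + β * Real.log (1 - s) + c = Real.log (1 / y - 1) := by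
  have hs0 := hs.1
  have hs1 : (0:ℝ) < 1 - s := by linarith [hs.2]
  have hy0 := hy.1
  have hy1 : (0:ℝ) < 1 / y - 1 := by
    rw [lt_sub_iff_add_lt, zero_add, lt_div_iff₀ hy0, one_mul]; exact hy.2
  have hexp : s ^ (-α) * (1 - s) ^ β * Real.exp c =
      Real.exp (-α * Real.log s + β * Real.log (1 - s) + c) := by
    rw [Real.rpow_def_of_pos hs0, Real.rpow_def_of_pos hs1, ← Real.exp_add, ← Real.exp_add]
    ring_nf
  rw [calCurve, hexp]
  set E := -α * Real.log s + β * Real.log (1 - s) + c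
  have hE : (0:ℝ) < Real.exp E := Real.exp_pos E
  constructor
  · intro h
    field_simp at h
    have h2 : Real.exp E = 1 / y - 1 := by
      have hy' : y ≠ 0 := ne_of_gt hy0
      field_simp
      linear_combination -h
    rw [← h2, Real.log_exp]
  · intro h
    have h2 : Real.exp E = 1 / y - 1 := by rw [h, Real.exp_log hy1]
    rw [h2]
    field_simp
    ring

/-- For pairwise distinct `s₁, s₂, s₃ ∈ (0,1)` and arbitrary `y₁, y₂, y₃ ∈ (0,1)`, there exists a
unique triple `(α, β, c)` with `g(sᵢ; α, β, c) = yᵢ` for `i = 1, 2, 3`; equivalently, the linear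
system `−α·ln(sᵢ) + β·ln(1−sᵢ) + c = ln(1/yᵢ − 1)` has a unique solution `(α, β, c)`. -/
theorem calCurve_exists_unique_interpolation (s₁ s₂ s₃ : ℝ)
    (hs₁ : s₁ ∈ Set.Ioo (0:ℝ) 1) (hs₂ : s₂ ∈ Set.Ioo (0:ℝ) 1) (hs₃ : s₃ ∈ Set.Ioo (0:ℝ) 1)
    (h₁₂ : s₁ ≠ s₂) (h₁₃ : s₁ ≠ s₃) (h₂₃ : s₂ ≠ s₃)
    (y₁ y₂ y₃ : ℝ)
    (hy₁ : y₁ ∈ Set.Ioo (0:ℝ) 1) (hy₂ : y₂ ∈ Set.Ioo (0:ℝ) 1) (hy₃ : y₃ ∈ Set.Ioo (0:ℝ) 1) :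
    (∃! t : ℝ × ℝ × ℝ,
      calCurve t.1 t.2.1 t.2.2 s₁ = y₁ ∧
      calCurve t.1 t.2.1 t.2.2 s₂ = y₂ ∧
      calCurve t.1 t.2.1 t.2.2 s₃ = y₃) ∧
    (∃! t : ℝ × ℝ × ℝ,
      -t.1 * Real.log s₁ + t.2.1 * Real.log (1 - s₁) + t.2.2 = Real.log (1 / y₁ - 1) ∧
      -t.1 * Real.log s₂ + t.2.1 * Real.log (1 - s₂) + t.2.2 = Real.log (1 / y₂ - 1) ∧
      -t.1 * Real.log s₃ + t.2.1 * Real.log (1 - s₃) + t.2.2 = Real.log (1 / y₃ - 1)) := by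
  set l₁ := Real.log s₁; set l₂ := Real.log s₂; set l₃ := Real.log s₃
  set m₁ := Real.log (1 - s₁); set m₂ := Real.log (1 - s₂); set m₃ := Real.log (1 - s₃)
  set r₁ := Real.log (1 / y₁ - 1); set r₂ := Real.log (1 / y₂ - 1); set r₃ := Real.log (1 / y₃ - 1)
  have hD : (l₁ - l₂) * (m₁ - m₃) - (l₁ - l₃) * (m₁ - m₂) ≠ 0 :=
    det_ne_zero hs₁ hs₂ hs₃ h₁₂ h₁₃ h₂₃
  set D := (l₁ - l₂) * (m₁ - m₃) - (l₁ - l₃) * (m₁ - m₂) with hDdef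
  -- unique solution of the linear system
  have lin : ∃! t : ℝ × ℝ × ℝ,
      -t.1 * l₁ + t.2.1 * m₁ + t.2.2 = r₁ ∧
      -t.1 * l₂ + t.2.1 * m₂ + t.2.2 = r₂ ∧
      -t.1 * l₃ + t.2.1 * m₃ + t.2.2 = r₃ := by
    set α := ((r₁ - r₃) * (m₁ - m₂) - (r₁ - r₂) * (m₁ - m₃)) / D with hα
    set β := ((r₁ - r₃) * (l₁ - l₂) - (r₁ - r₂) * (l₁ - l₃)) / D with hβ
    refine ⟨(α, β, r₁ + α * l₁ - β * m₁), ⟨?_, ?_, ?_⟩, ?_⟩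
    · simp only; ring
    · simp only [hα, hβ]; field_simp; ring
    · simp only [hα, hβ]; field_simp; ring
    · rintro ⟨a, b, cc⟩ ⟨e1, e2, e3⟩
      simp only at e1 e2 e3 ⊢
      have ha : a = α := by
        rw [hα, eq_div_iff hD, hDdef]
        linear_combination (m₁ - m₂) * (e1 - e3) - (m₁ - m₃) * (e1 - e2)
      have hb : b = β := by
        rw [hβ, eq_div_iff hD, hDdef]
        linear_combination (l₁ - l₂) * (e1 - e3) - (l₁ - l₃) * (e1 - e2)
      have hcc : cc = r₁ + α * l₁ - β * m₁ := by
        rw [← ha, ← hb]; linarith [e1]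
      rw [ha, hb, hcc]
  constructor
  · have := lin
    refine existsUnique_congr (fun t => ?_) |>.mpr lin
    rw [calCurve_eq_iff hs₁ hy₁, calCurve_eq_iff hs₂ hy₂, calCurve_eq_iff hs₃ hy₃]
  · exact lin
end

section
/- For any pairwise distinct s₁, s₂, s₃ ∈ (0,1), the three vectors (−ln(sᵢ), ln(1−sᵢ), 1) ∈ ℝ³, i = 1, 2, 3, are linearly independent; equivalently, the 3×3 matrix with rows (−ln(sᵢ), ln(1−sᵢ), 1) is invertible. -/
open Real Set

private lemma f_hasDerivAt (a b c t : ℝ) (h0 : 0 < t) (h1 : t < 1) :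
    HasDerivAt (fun t => a * Real.log t + b * Real.log (1 - t) + c)
      (a * t⁻¹ + b * (-(1 - t)⁻¹)) t := by
  have h1' : (1 : ℝ) - t ≠ 0 := by linarith
  have hlog1 : HasDerivAt (fun t : ℝ => Real.log t) t⁻¹ t := Real.hasDerivAt_log h0.ne'
  have hsub : HasDerivAt (fun t : ℝ => 1 - t) (-1) t := by
    simpa using (hasDerivAt_id' t).const_sub (1:ℝ)
  have hlog2 : HasDerivAt (fun t : ℝ => Real.log (1 - t)) ((1 - t)⁻¹ * -1) t :=
    (Real.hasDerivAt_log h1').comp t hsub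
  have : HasDerivAt (fun t : ℝ => a * Real.log t + b * Real.log (1 - t) + c)
      (a * t⁻¹ + b * ((1 - t)⁻¹ * -1)) t :=
    ((hlog1.const_mul a).add (hlog2.const_mul b)).add_const c
  convert this using 1
  ring

private lemma rolle_aux (a b c u v w : ℝ) (hu0 : 0 < u) (hw1 : w < 1)
    (huv : u < v) (hvw : v < w)
    (hfu : a * Real.log u + b * Real.log (1 - u) + c = 0)
    (hfv : a * Real.log v + b * Real.log (1 - v) + c = 0)
    (hfw : a * Real.log w + b * Real.log (1 - w) + c = 0) :
    a = 0 ∧ b = 0 ∧ c = 0 := by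
  set f : ℝ → ℝ := fun t => a * Real.log t + b * Real.log (1 - t) + c with hf
  set f' : ℝ → ℝ := fun t => a * t⁻¹ + b * (-(1 - t)⁻¹) with hf'
  have hv0 : 0 < v := hu0.trans huv
  have hv1 : v < 1 := hvw.trans hw1
  have hw0 : 0 < w := hv0.trans hvw
  have hu1 : u < 1 := huv.trans hv1
  have hderiv : ∀ t, 0 < t → t < 1 → HasDerivAt f (f' t) t := fun t h0 h1 =>
    f_hasDerivAt a b c t h0 h1
  have hcont : ∀ x y, 0 < x → y < 1 → ContinuousOn f (Icc x y) := by
    intro x y hx hy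
    intro t ht
    exact ((hderiv t (hx.trans_le ht.1) (lt_of_le_of_lt ht.2 hy)).continuousAt).continuousWithinAt
  obtain ⟨t₁, ht₁, hft₁⟩ := exists_hasDerivAt_eq_zero huv (hcont u v hu0 hv1)
    (hfu.trans hfv.symm) (fun x hx => hderiv x (hu0.trans hx.1) (hx.2.trans hv1))
  obtain ⟨t₂, ht₂, hft₂⟩ := exists_hasDerivAt_eq_zero hvw (hcont v w hv0 hw1)
    (hfv.trans hfw.symm) (fun x hx => hderiv x (hv0.trans hx.1) (hx.2.trans hw1))
  have ht₁0 : 0 < t₁ := hu0.trans ht₁.1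
  have ht₁1 : t₁ < 1 := ht₁.2.trans hv1
  have ht₂0 : 0 < t₂ := hv0.trans ht₂.1
  have ht₂1 : t₂ < 1 := ht₂.2.trans hw1
  -- from f' t = 0 derive a * (1 - t) - b * t = 0
  have key : ∀ t, 0 < t → t < 1 → f' t = 0 → a - (a + b) * t = 0 := by
    intro t h0 h1 h
    have h1' : (1 : ℝ) - t > 0 := by linarith
    have := congrArg (fun x => x * (t * (1 - t))) h
    simp only [hf', zero_mul] at this
    field_simp at this
    nlinarith [this]
  have e1 := key t₁ ht₁0 ht₁1 hft₁
  have e2 := key t₂ ht₂0 ht₂1 hft₂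
  have hne : t₁ ≠ t₂ := ne_of_lt (ht₁.2.trans ht₂.1)
  have hab : a + b = 0 := by
    by_contra h
    apply hne
    have : (a + b) * t₁ = (a + b) * t₂ := by linarith
    exact mul_left_cancel₀ h this
  have ha : a = 0 := by
    have := e1; rw [hab] at this; linarith
  have hb : b = 0 := by linarith
  refine ⟨ha, hb, ?_⟩
  rw [ha, hb] at hfu; linarith

private lemma rolle_aux' (a b c x y z : ℝ) (hx : x ∈ Set.Ioo (0:ℝ) 1)
    (hy : y ∈ Set.Ioo (0:ℝ) 1) (hz : z ∈ Set.Ioo (0:ℝ) 1)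
    (hxy : x ≠ y) (hxz : x ≠ z) (hyz : y ≠ z)
    (hfx : a * Real.log x + b * Real.log (1 - x) + c = 0)
    (hfy : a * Real.log y + b * Real.log (1 - y) + c = 0)
    (hfz : a * Real.log z + b * Real.log (1 - z) + c = 0) :
    a = 0 ∧ b = 0 ∧ c = 0 := by
  rcases hxy.lt_or_gt with h1 | h1 <;> rcases hxz.lt_or_gt with h2 | h2 <;>
    rcases hyz.lt_or_gt with h3 | h3
  · exact rolle_aux a b c x y z hx.1 hz.2 h1 h3 hfx hfy hfz
  · exact rolle_aux a b c x z y hx.1 hy.2 h2 h3 hfx hfz hfy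
  · exact absurd (h1.trans h3) (lt_asymm h2)
  · exact rolle_aux a b c z x y hz.1 hy.2 h2 h1 hfz hfx hfy
  · exact rolle_aux a b c y x z hy.1 hz.2 h1 h2 hfy hfx hfz
  · exact absurd (h3.trans h1) (lt_asymm h2)
  · exact rolle_aux a b c y z x hy.1 hx.2 h3 h2 hfy hfz hfx
  · exact rolle_aux a b c z y x hz.1 hx.2 h3 h1 hfz hfy hfx


/-- For pairwise distinct `s₁, s₂, s₃ ∈ (0,1)`, the three vectors `(−ln(sᵢ), ln(1−sᵢ), 1) ∈ ℝ³`
are linearly independent; equivalently, the `3×3` matrix with these rows is invertible. -/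
theorem log_vectors_linearIndependent (s : Fin 3 → ℝ)
    (hs : ∀ i, s i ∈ Set.Ioo (0:ℝ) 1) (hinj : Function.Injective s) :
    LinearIndependent ℝ (fun i : Fin 3 => ![-Real.log (s i), Real.log (1 - s i), (1:ℝ)]) ∧
    IsUnit (Matrix.of fun i j : Fin 3 => ![-Real.log (s i), Real.log (1 - s i), (1:ℝ)] j) := by
  set M : Matrix (Fin 3) (Fin 3) ℝ :=
    Matrix.of fun i j : Fin 3 => ![-Real.log (s i), Real.log (1 - s i), (1:ℝ)] j with hM
  have hcols : LinearIndependent ℝ (fun i => M.transpose i) := by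
    rw [Fintype.linearIndependent_iff]
    intro g hg
    have hj : ∀ j : Fin 3,
        (-(g 0)) * Real.log (s j) + g 1 * Real.log (1 - s j) + g 2 = 0 := by
      intro j
      have := congrFun hg j
      simp [hM, Fin.sum_univ_three, Matrix.transpose, hM] at this
      linarith [this]
    obtain ⟨ha, hb, hc⟩ := rolle_aux' (-(g 0)) (g 1) (g 2) (s 0) (s 1) (s 2)
      (hs 0) (hs 1) (hs 2)
      (fun h => absurd (hinj h) (by decide)) (fun h => absurd (hinj h) (by decide))
      (fun h => absurd (hinj h) (by decide)) (hj 0) (hj 1) (hj 2)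
    have h0 : g 0 = 0 := by linarith
    intro i
    fin_cases i
    · exact h0
    · exact hb
    · exact hc
  have hunit : IsUnit M := Matrix.linearIndependent_cols_iff_isUnit.mp hcols
  refine ⟨?_, hunit⟩
  have := Matrix.linearIndependent_rows_iff_isUnit.mpr hunit
  exact this
end
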